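/- arXiv:1603.02060 — 5 statements merged into one kernel-verified Lean document; each statement's English description precedes it below -/
import Mathlib

section
/- The function φ(λ) := x₁(λ)²/2 + λ·x₁(λ)/(1+x₁(λ)), where x₁(λ) is the smaller root of x(1+x)^2 = -λ in (-1,0), is strictly decreasing on (0, 4/27); its derivative equals x₁(λ)/(1+x₁(λ)) < 0. -/
open Set Filter Topology

private noncomputable def ffAux (x : ℝ) : ℝ := -(x * (1 + x) ^ 2)

private lemma ffAux_deriv (x : ℝ) : HasDerivAt ffAux (-((1 + x) * (1 + 3 * x))) x := by
  have h : HasDerivAt (fun x : ℝ => -(x * (1 + x) ^ 2))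
      (-(1 * (1 + x) ^ 2 + x * ((2 : ℕ) * (1 + x) ^ (2 - 1) * 1))) x :=
    ((hasDerivAt_id x).mul (((hasDerivAt_id x).const_add 1).pow 2)).neg
  convert (show HasDerivAt ffAux _ x from h) using 1
  push_cast
  ring

private lemma ffAux_mono : StrictMonoOn ffAux (Ioo (-1 : ℝ) (-1/3)) := by
  apply StrictMonoOn.mono (s := Icc (-1 : ℝ) (-1/3)) ?_ Ioo_subset_Icc_self
  apply strictMonoOn_of_deriv_pos (convex_Icc _ _)
  · exact fun x _ => (ffAux_deriv x).continuousAt.continuousWithinAt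
  · intro x hx
    rw [interior_Icc] at hx
    rw [(ffAux_deriv x).deriv]
    obtain ⟨h1, h2⟩ := hx
    nlinarith

/-- φ(λ) = x₁(λ)²/2 + λ·x₁(λ)/(1+x₁(λ)) is strictly decreasing on
(0, 4/27); its derivative is x₁(λ)/(1+x₁(λ)) < 0. -/
theorem stmt_8 (x1 : ℝ → ℝ)
    (hx1 : ∀ lam ∈ Set.Ioo (0 : ℝ) (4/27),
      x1 lam ∈ Set.Ioo (-1 : ℝ) (-1/3) ∧ x1 lam * (1 + x1 lam) ^ 2 = -lam)
    (phi : ℝ → ℝ)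
    (hphi : ∀ lam, phi lam = (x1 lam) ^ 2 / 2 + lam * x1 lam / (1 + x1 lam)) :
    StrictAntiOn phi (Set.Ioo (0 : ℝ) (4/27)) ∧
    ∀ lam ∈ Set.Ioo (0 : ℝ) (4/27),
      HasDerivAt phi (x1 lam / (1 + x1 lam)) lam ∧ x1 lam / (1 + x1 lam) < 0 := by
  have hff : ∀ lam ∈ Ioo (0 : ℝ) (4/27), ffAux (x1 lam) = lam := by
    intro lam h
    have := (hx1 lam h).2
    simp only [ffAux]
    linarith
  have key : ∀ lam ∈ Ioo (0 : ℝ) (4/27),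
      HasDerivAt phi (x1 lam / (1 + x1 lam)) lam ∧ x1 lam / (1 + x1 lam) < 0 := by
    intro lam hlam
    obtain ⟨⟨ha1, ha2⟩, hroot⟩ := hx1 lam hlam
    set x₀ := x1 lam with hx₀
    -- continuity of x1 at lam
    have hcont : ContinuousAt x1 lam := by
      rw [ContinuousAt, tendsto_order]
      constructor
      · intro a ha
        set a' := max a ((x₀ - 1) / 2) with ha'
        have ha'mem : a' ∈ Ioo (-1 : ℝ) (-1/3) := by
          constructor
          · rw [lt_max_iff]; right; linarith
          · rw [max_lt_iff]; exact ⟨by linarith, by linarith⟩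
        have ha'lt : a' < x₀ := by rw [max_lt_iff]; exact ⟨ha, by linarith⟩
        have hfa : ffAux a' < lam := by
          rw [← hff lam hlam]
          exact ffAux_mono ha'mem ⟨ha1, ha2⟩ ha'lt
        have hnb : Ioo (max (ffAux a') 0) (4/27 : ℝ) ∈ 𝓝 lam :=
          Ioo_mem_nhds (by rw [max_lt_iff]; exact ⟨hfa, hlam.1⟩) hlam.2
        filter_upwards [hnb] with y hy
        have hy' : y ∈ Ioo (0 : ℝ) (4/27) :=
          ⟨lt_of_le_of_lt (le_max_right _ _) hy.1, hy.2⟩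
        have hxy := (hx1 y hy').1
        have : ffAux a' < ffAux (x1 y) := by
          rw [hff y hy']; exact lt_of_le_of_lt (le_max_left _ _) hy.1
        have : a' < x1 y := (ffAux_mono.lt_iff_lt ha'mem hxy).1 this
        exact lt_of_le_of_lt (le_max_left _ _) this
      · intro b hb
        set b' := min b ((x₀ + (-1/3)) / 2) with hb'
        have hb'mem : b' ∈ Ioo (-1 : ℝ) (-1/3) := by
          constructor
          · rw [lt_min_iff]; exact ⟨by linarith, by linarith⟩
          · rw [min_lt_iff]; right; linarith
        have hb'gt : x₀ < b' := by rw [lt_min_iff]; exact ⟨hb, by linarith⟩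
        have hfb : lam < ffAux b' := by
          rw [← hff lam hlam]
          exact ffAux_mono ⟨ha1, ha2⟩ hb'mem hb'gt
        have hnb : Ioo (0 : ℝ) (min (ffAux b') (4/27)) ∈ 𝓝 lam :=
          Ioo_mem_nhds hlam.1 (by rw [lt_min_iff]; exact ⟨hfb, hlam.2⟩)
        filter_upwards [hnb] with y hy
        have hy' : y ∈ Ioo (0 : ℝ) (4/27) :=
          ⟨hy.1, lt_of_lt_of_le hy.2 (min_le_right _ _)⟩
        have hxy := (hx1 y hy').1
        have : ffAux (x1 y) < ffAux b' := by
          rw [hff y hy']; exact lt_of_lt_of_le hy.2 (min_le_left _ _)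
        have : x1 y < b' := (ffAux_mono.lt_iff_lt hxy hb'mem).1 this
        exact lt_of_lt_of_le this (min_le_left _ _)
    have hd' : (-((1 + x₀) * (1 + 3 * x₀))) ≠ 0 := by nlinarith
    have hfg : ∀ᶠ y in 𝓝 lam, ffAux (x1 y) = y :=
      Filter.eventually_of_mem (Ioo_mem_nhds hlam.1 hlam.2) hff
    have hder : HasDerivAt x1 (-((1 + x₀) * (1 + 3 * x₀)))⁻¹ lam :=
      (ffAux_deriv x₀).of_local_left_inverse hcont hd' hfg
    -- phi eventually equals g ∘ x1 with g x = -x^3 - x^2/2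
    have hphi_eq : phi =ᶠ[𝓝 lam] fun y => -(x1 y) ^ 3 - (x1 y) ^ 2 / 2 := by
      filter_upwards [Ioo_mem_nhds hlam.1 hlam.2] with y hy
      obtain ⟨⟨hb1, hb2⟩, hr⟩ := hx1 y hy
      have h1 : (1 : ℝ) + x1 y ≠ 0 := by linarith
      rw [hphi y]
      have hy' : y = -(x1 y * (1 + x1 y) ^ 2) := by linarith
      generalize hu : x1 y = u at *
      rw [hy']
      field_simp
      ring
    have hcomp : HasDerivAt (fun y => -(x1 y) ^ 3 - (x1 y) ^ 2 / 2)
        ((-3 * x₀ ^ 2 - x₀) * (-((1 + x₀) * (1 + 3 * x₀)))⁻¹) lam := by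
      have hg : HasDerivAt (fun x : ℝ => -x ^ 3 - x ^ 2 / 2) (-3 * x₀ ^ 2 - x₀) x₀ := by
        have : HasDerivAt (fun x : ℝ => -x ^ 3 - x ^ 2 / 2)
            (-(((3 : ℕ) * x₀ ^ (3 - 1) * 1)) - ((2 : ℕ) * x₀ ^ (2 - 1) * 1) / 2) x₀ := by
          exact (((hasDerivAt_id x₀).pow 3).neg).sub (((hasDerivAt_id x₀).pow 2).div_const 2)
        convert this using 1
        push_cast
        ring
      exact hg.comp lam hder
    have hval : (-3 * x₀ ^ 2 - x₀) * (-((1 + x₀) * (1 + 3 * x₀)))⁻¹ = x₀ / (1 + x₀) := by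
      have h1 : (1 : ℝ) + x₀ ≠ 0 := by linarith
      have h2 : (1 : ℝ) + 3 * x₀ ≠ 0 := by
        intro h; nlinarith
      field_simp
      ring
    have hphider : HasDerivAt phi (x₀ / (1 + x₀)) lam := by
      rw [← hval]
      exact hcomp.congr_of_eventuallyEq hphi_eq
    refine ⟨hphider, div_neg_of_neg_of_pos (by linarith) (by linarith)⟩
  refine ⟨?_, key⟩
  apply strictAntiOn_of_deriv_neg (convex_Ioo _ _)
  · exact fun x hx => ((key x hx).1).continuousAt.continuousWithinAt
  · intro x hx
    rw [interior_Ioo] at hx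
    rw [((key x hx).1).deriv]
    exact (key x hx).2
end

section
/- There exists a unique λ ∈ (0, 4/27) with φ(λ) = 0, where φ(λ) = x₁(λ)²/2 + λ·x₁(λ)/(1+x₁(λ)) and x₁(λ) is the smaller root of x(1+x)^2 = -λ; this value is λ = 1/8, and correspondingly x₁(1/8) = -1/2. -/
/-- There is a unique λ ∈ (0, 4/27) with φ(λ) = 0; it is λ = 1/8, and
x₁(1/8) = -1/2. -/
theorem stmt_11 (x1 : ℝ → ℝ)
    (hx1 : ∀ lam ∈ Set.Ioo (0 : ℝ) (4/27),
      x1 lam ∈ Set.Ioo (-1 : ℝ) (-1/3) ∧ x1 lam * (1 + x1 lam) ^ 2 = -lam)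
    (phi : ℝ → ℝ)
    (hphi : ∀ lam, phi lam = (x1 lam) ^ 2 / 2 + lam * x1 lam / (1 + x1 lam)) :
    ((1/8 : ℝ) ∈ Set.Ioo (0 : ℝ) (4/27) ∧ phi (1/8) = 0 ∧ x1 (1/8) = -1/2) ∧
    ∀ lam ∈ Set.Ioo (0 : ℝ) (4/27), phi lam = 0 → lam = 1/8 := by
  have hmem : (1/8 : ℝ) ∈ Set.Ioo (0 : ℝ) (4/27) := by constructor <;> norm_num
  obtain ⟨⟨h1, h2⟩, heq⟩ := hx1 (1/8) hmem
  set x := x1 (1/8) with hxdef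
  have hxval : x = -1/2 := by
    have hfac : (x + 1/2) * (x^2 + 3/2 * x + 1/4) = 0 := by nlinarith [heq]
    have hneg : x^2 + 3/2 * x + 1/4 < 0 := by nlinarith
    have := mul_eq_zero.mp hfac
    rcases this with h | h
    · linarith
    · linarith
  refine ⟨⟨hmem, ?_, hxval⟩, ?_⟩
  · rw [hphi, ← hxdef, hxval]; norm_num
  · intro lam hlam hphi0
    obtain ⟨⟨ha, hb⟩, heq'⟩ := hx1 lam hlam
    set y := x1 lam with hydef
    have hy1 : (1 : ℝ) + y > 0 := by linarith
    have hphy : phi lam = y^2/2 + lam * y / (1 + y) := by rw [hphi]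
    rw [hphy] at hphi0
    have key : y^2/2 * (1 + y) + lam * y = 0 := by
      field_simp at hphi0; linarith
    -- substitute lam = -y(1+y)^2
    have hlamval : lam = -(y * (1 + y)^2) := by linarith [heq']
    rw [hlamval] at key
    -- key : y^2/2*(1+y) - y(1+y)^2 * y = 0, i.e. y^2(1+y)(1/2 - (1+y)) = 0
    have hyne : y ≠ 0 := by intro h; rw [h] at hb; norm_num at hb
    have : y = -1/2 := by
      have h2 : y^2 * (1 + y) * (y + 1/2) = 0 := by ring_nf; ring_nf at key; linarith
      rcases mul_eq_zero.mp h2 with h | h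
      · rcases mul_eq_zero.mp h with h' | h'
        · exact absurd (pow_eq_zero_iff (by norm_num) |>.mp h') hyne
        · linarith
      · linarith
    rw [this] at hlamval
    rw [hlamval]; norm_num
end

section
/- For fixed λ ∈ (0, 4/27) and α > 0, on the line segment {(x, m(x - x₂(λ))) : x₁(λ) ≤ x ≤ x₂(λ)} with slope m = -α/2 - √((α/2)² - s(λ))/1 (any negative root m of m² + αm + s(λ) = 0 when α > 2√(s(λ))), the vector field V(x,y) = (y, -(αy + f(x,λ))) satisfies ⟨N, V⟩ ≤ 0 where N = (-m, 1), i.e. the field points into the triangle below the segment. -/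
/-- On the segment {(x, m(x-x₂)) : x₁ ≤ x ≤ x₂} with m a negative root of
m² + αm + s(λ) = 0 (α > 2√s(λ)), the vector field
V(x,y) = (y, -(αy + f(x,λ))) satisfies ⟨N,V⟩ ≤ 0 with N = (-m, 1). -/
theorem stmt_16 (lam alpha x1 x2 s m : ℝ)
    (h0 : 0 < lam) (h1 : lam < 4/27)
    (hx1 : x1 ∈ Set.Ioo (-1 : ℝ) (-1/3)) (hx2 : x2 ∈ Set.Ioo (-1/3 : ℝ) 0)
    (hr1 : x1 + lam / (1 + x1) ^ 2 = 0) (hr2 : x2 + lam / (1 + x2) ^ 2 = 0)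
    (hs : s = 1 - 2 * lam / (1 + x2) ^ 3)
    (halpha : 2 * Real.sqrt s < alpha)
    (hm : m < 0) (hroot : m ^ 2 + alpha * m + s = 0) :
    ∀ x ∈ Set.Icc x1 x2,
      (-m) * (m * (x - x2)) +
        (-(alpha * (m * (x - x2)) + (x + lam / (1 + x) ^ 2))) ≤ 0 := by
  intro x hx
  obtain ⟨hxl, hxr⟩ := hx
  have hu : (0:ℝ) < 1 + x := by linarith [hx1.1]
  have hv : (0:ℝ) < 1 + x2 := by linarith [hx2.1]
  have hu2 : (1 + x)^2 ≠ 0 := by positivity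
  have hv2 : (1 + x2)^2 ≠ 0 := by positivity
  have hlam : lam = -x2 * (1 + x2)^2 := by
    field_simp at hr2
    nlinarith [hr2]
  have hsv : s * (1 + x2) = 1 + 3 * x2 := by
    rw [hs, hlam]
    field_simp
    ring
  -- key: A := x + lam/(1+x)^2 - s*(x-x2) ≥ 0
  have hprod : (x + lam / (1 + x)^2 - s * (x - x2)) * ((1 + x)^2 * (1 + x2))
      = -x2 * (x - x2)^2 * (2 * x + 3 + x2) := by
    rw [hlam]
    field_simp
    linear_combination (-(x - x2) * (1 + x)^2) * hsv
  have hpos : 0 ≤ -x2 * (x - x2)^2 * (2 * x + 3 + x2) := by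
    apply mul_nonneg
    · apply mul_nonneg (by linarith [hx2.2]) (sq_nonneg _)
    · linarith
  have hP : (0:ℝ) < (1 + x)^2 * (1 + x2) := by positivity
  have hA : 0 ≤ x + lam / (1 + x)^2 - s * (x - x2) := by
    nlinarith [hprod, hpos, hP]
  have hsub : -m * (m * (x - x2)) - alpha * (m * (x - x2)) = s * (x - x2) := by
    linear_combination (-(x - x2)) * hroot
  linarith [hA, hsub]
end

section
/- For fixed λ ∈ (0, 4/27), s(λ) := 1 - 2λ/(1+x₂(λ))³ equals the supremum over x ∈ (x₁(λ), x₂(λ)) of f(x,λ)/(x - x₂(λ)), where f(x,λ) = x + λ/(1+x)². -/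
/-- s(λ) := 1 - 2λ/(1+x₂(λ))³ equals the supremum over x ∈ (x₁, x₂) of
f(x,λ)/(x - x₂), where f(x,λ) = x + λ/(1+x)². -/
theorem stmt_17 (lam x1 x2 : ℝ) (h0 : 0 < lam) (h1 : lam < 4/27)
    (hx1 : x1 ∈ Set.Ioo (-1 : ℝ) (-1/3)) (hx2 : x2 ∈ Set.Ioo (-1/3 : ℝ) 0)
    (hr1 : x1 + lam / (1 + x1) ^ 2 = 0) (hr2 : x2 + lam / (1 + x2) ^ 2 = 0) :
    IsLUB ((fun x : ℝ => (x + lam / (1 + x) ^ 2) / (x - x2)) '' Set.Ioo x1 x2)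
      (1 - 2 * lam / (1 + x2) ^ 3) := by
  obtain ⟨hx1a, hx1b⟩ := hx1
  obtain ⟨hx2a, hx2b⟩ := hx2
  have h12 : x1 < x2 := by linarith
  have h2pos : (0:ℝ) < 1 + x2 := by linarith
  have h2ne : (1 + x2) ≠ 0 := ne_of_gt h2pos
  have hlam : lam = -x2 * (1 + x2) ^ 2 := by
    have h := hr2
    field_simp at h
    nlinarith [sq_nonneg (1 + x2)]
  have hs : 1 - 2 * lam / (1 + x2) ^ 3 = (1 + 3 * x2) / (1 + x2) := by
    rw [hlam]; field_simp; ring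
  -- the "smooth" version of the quotient
  have hg : ∀ x ∈ Set.Ioo x1 x2,
      (x + lam / (1 + x) ^ 2) / (x - x2)
        = (x ^ 2 + x * x2 + x2 ^ 2 + 2 * x + 2 * x2 + 1) / (1 + x) ^ 2 := by
    intro x hx
    have hxp : (0:ℝ) < 1 + x := by linarith [hx.1]
    have hxne : (1 + x) ≠ 0 := ne_of_gt hxp
    have hsne : x - x2 ≠ 0 := by
      have := hx.2; intro h; apply absurd this; simp [sub_eq_zero.mp h]
    rw [hlam]
    field_simp
    ring
  constructor
  · rintro y ⟨x, hx, rfl⟩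
    simp only []
    rw [hg x hx, hs]
    have hxp : (0:ℝ) < 1 + x := by linarith [hx.1]
    rw [div_le_div_iff₀ (by positivity) h2pos]
    nlinarith [mul_nonneg (mul_nonneg (le_of_lt (neg_pos.2 hx2b))
      (le_of_lt (sub_pos.2 hx.2))) (by nlinarith [hx.1] : (0:ℝ) ≤ 2 * x + x2 + 3)]
  · intro b hb
    -- s is the limit of the function as x → x2 from within the interval
    have hne : x1 ≠ x2 := ne_of_lt h12
    haveI : (nhdsWithin x2 (Set.Ioo x1 x2)).NeBot := by
      apply mem_closure_iff_nhdsWithin_neBot.mp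
      rw [closure_Ioo hne]
      exact ⟨le_of_lt h12, le_refl _⟩
    have hcont : ContinuousAt
        (fun x : ℝ => (x ^ 2 + x * x2 + x2 ^ 2 + 2 * x + 2 * x2 + 1) / (1 + x) ^ 2) x2 := by
      apply ContinuousAt.div
      · fun_prop
      · fun_prop
      · positivity
    have hval : (x2 ^ 2 + x2 * x2 + x2 ^ 2 + 2 * x2 + 2 * x2 + 1) / (1 + x2) ^ 2
        = 1 - 2 * lam / (1 + x2) ^ 3 := by
      rw [hs]
      rw [div_eq_div_iff (by positivity) h2ne]
      ring
    have htend : Filter.Tendsto (fun x : ℝ => (x + lam / (1 + x) ^ 2) / (x - x2))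
        (nhdsWithin x2 (Set.Ioo x1 x2)) (nhds (1 - 2 * lam / (1 + x2) ^ 3)) := by
      have h1 : Filter.Tendsto
          (fun x : ℝ => (x ^ 2 + x * x2 + x2 ^ 2 + 2 * x + 2 * x2 + 1) / (1 + x) ^ 2)
          (nhdsWithin x2 (Set.Ioo x1 x2)) (nhds (1 - 2 * lam / (1 + x2) ^ 3)) := by
        rw [← hval]
        exact hcont.continuousWithinAt.tendsto
      apply h1.congr'
      filter_upwards [self_mem_nhdsWithin] with x hx
      exact (hg x hx).symm
    exact le_of_tendsto htend (by
      filter_upwards [self_mem_nhdsWithin] with x hx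
      exact hb ⟨x, hx, rfl⟩)
end

section
/- If Φ₁, Φ₂ are continuous on [0, b), differentiable and positive on (0, b), satisfy Φⱼ'(u) = αⱼ - q(u)/Φⱼ(u) with Φⱼ(0) = 0, where q is continuous, α₁ < α₂, and Φ₁(u) < Φ₂(u) for all sufficiently small u > 0, then Φ₁(u) < Φ₂(u) for all u ∈ (0, b). -/
/-- Monotonicity in α of solutions of Φ'(u) = α - q(u)/Φ(u): if
0 < α₁ < α₂, Φⱼ vanish at 0, are positive on (0,b), satisfy the respective
ODEs there, and Φ₁ < Φ₂ for all small u > 0, then Φ₁ < Φ₂ on (0,b). -/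
theorem stmt_19 (b : ℝ) (hb : 0 < b) (q : ℝ → ℝ)
    (hq : ContinuousOn q (Set.Ico 0 b))
    (alpha1 alpha2 : ℝ) (h1 : 0 < alpha1) (h12 : alpha1 < alpha2)
    (Phi1 Phi2 : ℝ → ℝ)
    (hc1 : ContinuousOn Phi1 (Set.Ico 0 b)) (hc2 : ContinuousOn Phi2 (Set.Ico 0 b))
    (h01 : Phi1 0 = 0) (h02 : Phi2 0 = 0)
    (hp1 : ∀ u ∈ Set.Ioo (0 : ℝ) b, 0 < Phi1 u)
    (hp2 : ∀ u ∈ Set.Ioo (0 : ℝ) b, 0 < Phi2 u)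
    (hd1 : ∀ u ∈ Set.Ioo (0 : ℝ) b, HasDerivAt Phi1 (alpha1 - q u / Phi1 u) u)
    (hd2 : ∀ u ∈ Set.Ioo (0 : ℝ) b, HasDerivAt Phi2 (alpha2 - q u / Phi2 u) u)
    (hsmall : ∃ ε > 0, ∀ u ∈ Set.Ioo (0 : ℝ) ε, Phi1 u < Phi2 u) :
    ∀ u ∈ Set.Ioo (0 : ℝ) b, Phi1 u < Phi2 u := by
  by_contra hcon
  push_neg at hcon
  obtain ⟨u₀, hu₀, hge⟩ := hcon
  obtain ⟨ε, hε, hsm⟩ := hsmall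
  set D : ℝ → ℝ := fun u => Phi2 u - Phi1 u with hD
  set S : Set ℝ := {u | u ∈ Set.Ioo (0 : ℝ) b ∧ D u ≤ 0} with hSdef
  have hu₀S : u₀ ∈ S := ⟨hu₀, by simp [hD, sub_nonpos.mpr hge]⟩
  have hne : S.Nonempty := ⟨u₀, hu₀S⟩
  have hbdd : BddBelow S := ⟨0, fun u hu => le_of_lt hu.1.1⟩
  set t := sInf S with ht
  have htlb : ∀ u ∈ S, t ≤ u := fun u hu => csInf_le hbdd hu
  have hεlb : ∀ u ∈ S, ε ≤ u := by
    intro u hu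
    by_contra h
    push_neg at h
    have := hsm u ⟨hu.1.1, h⟩
    have h2 := hu.2
    simp only [hD] at h2
    linarith
  have htpos : 0 < t := lt_of_lt_of_le hε (le_csInf hne hεlb)
  have htb : t < b := lt_of_le_of_lt (htlb u₀ hu₀S) hu₀.2
  have htmem : t ∈ Set.Ioo (0 : ℝ) b := ⟨htpos, htb⟩
  have hnhds : Set.Ico (0 : ℝ) b ∈ nhds t :=
    Filter.mem_of_superset (isOpen_Ioo.mem_nhds htmem) Set.Ioo_subset_Ico_self
  have hDc : ContinuousAt D t :=
    ((hc2.continuousAt hnhds).sub (hc1.continuousAt hnhds))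
  -- D t ≤ 0
  have hclos : t ∈ closure S := csInf_mem_closure hne hbdd
  have hnb : (nhdsWithin t S).NeBot := mem_closure_iff_nhdsWithin_neBot.mp hclos
  have hDt_le : D t ≤ 0 := by
    have htend : Filter.Tendsto D (nhdsWithin t S) (nhds (D t)) :=
      hDc.continuousWithinAt.tendsto
    refine le_of_tendsto htend ?_
    filter_upwards [self_mem_nhdsWithin] with u hu using hu.2
  -- D > 0 on (0, t)
  have hDpos : ∀ u ∈ Set.Ioo (0 : ℝ) t, 0 < D u := by
    intro u hu
    by_contra h
    push_neg at h
    have huS : u ∈ S := ⟨⟨hu.1, lt_trans hu.2 htb⟩, h⟩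
    exact absurd (htlb u huS) (not_le.mpr hu.2)
  -- D t ≥ 0
  have hDt_ge : 0 ≤ D t := by
    have htend : Filter.Tendsto D (nhdsWithin t (Set.Iio t)) (nhds (D t)) :=
      hDc.tendsto.mono_left nhdsWithin_le_nhds
    refine ge_of_tendsto htend ?_
    have hIoo : Set.Ioo (0 : ℝ) t ∈ nhdsWithin t (Set.Iio t) :=
      Ioo_mem_nhdsLT_of_mem ⟨htpos, le_refl t⟩
    filter_upwards [hIoo] with u hu using le_of_lt (hDpos u hu)
  have hDt : D t = 0 := le_antisymm hDt_le hDt_ge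
  have heq : Phi1 t = Phi2 t := by
    simp only [hD] at hDt; linarith
  -- derivative of D at t is alpha2 - alpha1 > 0
  have hder : HasDerivAt D (alpha2 - alpha1) t := by
    have h := (hd2 t htmem).sub (hd1 t htmem)
    have : (alpha2 - q t / Phi2 t) - (alpha1 - q t / Phi1 t) = alpha2 - alpha1 := by
      rw [heq]; ring
    rwa [this] at h
  rw [hasDerivAt_iff_tendsto_slope] at hder
  have hslope : ∀ᶠ u in nhdsWithin t {t}ᶜ, 0 < slope D t u :=
    hder.eventually (eventually_gt_nhds (by linarith))
  have hmono : nhdsWithin t (Set.Iio t) ≤ nhdsWithin t {t}ᶜ :=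
    nhdsWithin_mono t (fun x hx => ne_of_lt hx)
  have hIoo : Set.Ioo (0 : ℝ) t ∈ nhdsWithin t (Set.Iio t) :=
    Ioo_mem_nhdsLT_of_mem ⟨htpos, le_refl t⟩
  have : ∀ᶠ u in nhdsWithin t (Set.Iio t),
      0 < slope D t u ∧ u ∈ Set.Ioo (0 : ℝ) t :=
    Filter.eventually_and.mpr ⟨hmono hslope, Filter.eventually_of_mem hIoo fun u hu => hu⟩
  obtain ⟨u, hu1, hu2⟩ := this.exists
  have hut : u - t < 0 := sub_neg.mpr hu2.2
  have : slope D t u = (D u - D t) / (u - t) := by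
    simp [slope_def_field]
  rw [this, hDt, sub_zero] at hu1
  have hDu : D u < 0 := by
    by_contra h
    push_neg at h
    have : D u / (u - t) ≤ 0 := div_nonpos_of_nonneg_of_nonpos h (le_of_lt hut)
    linarith
  exact absurd (hDpos u hu2) (not_lt.mpr (le_of_lt hDu))
end
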